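/- Let (Jσ, Jτ, Jστ) ∈ D and set s = tanh Jσ, t = tanh Jτ, l = tanh Jστ. Then (Jσ, Jτ, Jστ) is a fixed point of the duality relations, i.e. (s+tl)/(1+stl) = e^{−2(Jτ+Jστ)}, (t+sl)/(1+stl) = e^{−2(Jσ+Jστ)} and (l+st)/(1+stl) = e^{−2(Jσ+Jτ)} all hold, if and only if l = (1 − st − s − t)/(1 − st + s + t). -/
import Mathlib

set_option maxHeartbeats 2000000

lemma tanh_eq_exp (x : ℝ) :
    Real.tanh x = (1 - Real.exp (-(2*x))) / (1 + Real.exp (-(2*x))) := by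
  rw [Real.tanh_eq_sinh_div_cosh, Real.sinh_eq, Real.cosh_eq]
  have h1 : Real.exp (-(2*x)) = Real.exp (-x) * Real.exp (-x) := by
    rw [← Real.exp_add]; ring_nf
  have h2 : Real.exp (-x) = (Real.exp x)⁻¹ := Real.exp_neg x
  have hx := (Real.exp_pos x).ne'
  rw [h1, h2]
  field_simp

lemma alg (a b c : ℝ) (ha : 0 < a) (ha1 : a < 1) (hb : 0 < b) (hb1 : b < 1) (hc : 0 < c) :
    (((1-a)/(1+a) + (1-b)/(1+b) * ((1-c)/(1+c))) /
        (1 + (1-a)/(1+a) * ((1-b)/(1+b)) * ((1-c)/(1+c))) = b*c ∧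
     ((1-b)/(1+b) + (1-a)/(1+a) * ((1-c)/(1+c))) /
        (1 + (1-a)/(1+a) * ((1-b)/(1+b)) * ((1-c)/(1+c))) = a*c ∧
     ((1-c)/(1+c) + (1-a)/(1+a) * ((1-b)/(1+b))) /
        (1 + (1-a)/(1+a) * ((1-b)/(1+b)) * ((1-c)/(1+c))) = a*b)
    ↔
    (1-c)/(1+c) =
      (1 - (1-a)/(1+a) * ((1-b)/(1+b)) - (1-a)/(1+a) - (1-b)/(1+b)) /
      (1 - (1-a)/(1+a) * ((1-b)/(1+b)) + (1-a)/(1+a) + (1-b)/(1+b)) := by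
  have h1a : (0:ℝ) < 1 + a := by linarith
  have h1b : (0:ℝ) < 1 + b := by linarith
  have h1c : (0:ℝ) < 1 + c := by linarith
  have hden : 1 + (1-a)/(1+a) * ((1-b)/(1+b)) * ((1-c)/(1+c))
      = 2*(1+a*b+a*c+b*c)/((1+a)*(1+b)*(1+c)) := by
    field_simp; ring
  have hdenpos : (0:ℝ) < 1 + (1-a)/(1+a) * ((1-b)/(1+b)) * ((1-c)/(1+c)) := by
    rw [hden]; positivity
  have hd2 : 1 - (1-a)/(1+a) * ((1-b)/(1+b)) + (1-a)/(1+a) + (1-b)/(1+b)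
      = 2*(a+b+(1-a*b))/((1+a)*(1+b)) := by
    field_simp; ring
  have hab : a*b < 1 := by nlinarith
  have hd2pos : (0:ℝ) < 1 - (1-a)/(1+a) * ((1-b)/(1+b)) + (1-a)/(1+a) + (1-b)/(1+b) := by
    rw [hd2]; exact div_pos (by nlinarith) (by positivity)
  set Q : ℝ := 1 - a*b - a*c - b*c with hQ
  have e1 : ((1-a)/(1+a) + (1-b)/(1+b) * ((1-c)/(1+c))) /
        (1 + (1-a)/(1+a) * ((1-b)/(1+b)) * ((1-c)/(1+c))) = b*c ↔ Q = 0 := by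
    rw [div_eq_iff hdenpos.ne', ← sub_eq_zero]
    have k : ((1-a)/(1+a) + (1-b)/(1+b) * ((1-c)/(1+c)))
        - b*c*(1 + (1-a)/(1+a) * ((1-b)/(1+b)) * ((1-c)/(1+c)))
        = 2*(1+b*c)*Q/((1+a)*(1+b)*(1+c)) := by
      rw [hQ]; field_simp; ring
    rw [k, div_eq_zero_iff, or_iff_left (by positivity), mul_eq_zero,
      or_iff_right (by positivity : (2:ℝ)*(1+b*c) ≠ 0)]
  have e2 : ((1-b)/(1+b) + (1-a)/(1+a) * ((1-c)/(1+c))) /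
        (1 + (1-a)/(1+a) * ((1-b)/(1+b)) * ((1-c)/(1+c))) = a*c ↔ Q = 0 := by
    rw [div_eq_iff hdenpos.ne', ← sub_eq_zero]
    have k : ((1-b)/(1+b) + (1-a)/(1+a) * ((1-c)/(1+c)))
        - a*c*(1 + (1-a)/(1+a) * ((1-b)/(1+b)) * ((1-c)/(1+c)))
        = 2*(1+a*c)*Q/((1+a)*(1+b)*(1+c)) := by
      rw [hQ]; field_simp; ring
    rw [k, div_eq_zero_iff, or_iff_left (by positivity), mul_eq_zero,
      or_iff_right (by positivity : (2:ℝ)*(1+a*c) ≠ 0)]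
  have e3 : ((1-c)/(1+c) + (1-a)/(1+a) * ((1-b)/(1+b))) /
        (1 + (1-a)/(1+a) * ((1-b)/(1+b)) * ((1-c)/(1+c))) = a*b ↔ Q = 0 := by
    rw [div_eq_iff hdenpos.ne', ← sub_eq_zero]
    have k : ((1-c)/(1+c) + (1-a)/(1+a) * ((1-b)/(1+b)))
        - a*b*(1 + (1-a)/(1+a) * ((1-b)/(1+b)) * ((1-c)/(1+c)))
        = 2*(1+a*b)*Q/((1+a)*(1+b)*(1+c)) := by
      rw [hQ]; field_simp; ring
    rw [k, div_eq_zero_iff, or_iff_left (by positivity), mul_eq_zero,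
      or_iff_right (by positivity : (2:ℝ)*(1+a*b) ≠ 0)]
  have e4 : ((1-c)/(1+c) =
      (1 - (1-a)/(1+a) * ((1-b)/(1+b)) - (1-a)/(1+a) - (1-b)/(1+b)) /
      (1 - (1-a)/(1+a) * ((1-b)/(1+b)) + (1-a)/(1+a) + (1-b)/(1+b))) ↔ Q = 0 := by
    rw [eq_div_iff hd2pos.ne', ← sub_eq_zero]
    have k : (1-c)/(1+c) * (1 - (1-a)/(1+a) * ((1-b)/(1+b)) + (1-a)/(1+a) + (1-b)/(1+b))
        - (1 - (1-a)/(1+a) * ((1-b)/(1+b)) - (1-a)/(1+a) - (1-b)/(1+b))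
        = 4*Q/((1+a)*(1+b)*(1+c)) := by
      rw [hQ]; field_simp; ring
    rw [k, div_eq_zero_iff, or_iff_left (by positivity), mul_eq_zero,
      or_iff_right (by norm_num : (4:ℝ) ≠ 0)]
  rw [e1, e2, e3, e4]
  tauto


/-- For `(Jσ, Jτ, Jστ) ∈ D`, the triple is a fixed point of the duality
relations iff `l = (1 - st - s - t)/(1 - st + s + t)` where `s = tanh Jσ`, `t = tanh Jτ`,
`l = tanh Jστ`. -/
theorem stmt2 (Jσ Jτ Jστ : ℝ)
    (h1 : Jσ ≥ Jτ) (h2 : Jτ ≥ Jστ) (h3 : Jτ > 0)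
    (h4 : Real.tanh Jστ > -(Real.tanh Jσ * Real.tanh Jτ)) :
    ((Real.tanh Jσ + Real.tanh Jτ * Real.tanh Jστ) /
        (1 + Real.tanh Jσ * Real.tanh Jτ * Real.tanh Jστ) = Real.exp (-2 * (Jτ + Jστ)) ∧
     (Real.tanh Jτ + Real.tanh Jσ * Real.tanh Jστ) /
        (1 + Real.tanh Jσ * Real.tanh Jτ * Real.tanh Jστ) = Real.exp (-2 * (Jσ + Jστ)) ∧
     (Real.tanh Jστ + Real.tanh Jσ * Real.tanh Jτ) /
        (1 + Real.tanh Jσ * Real.tanh Jτ * Real.tanh Jστ) = Real.exp (-2 * (Jσ + Jτ)))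
    ↔
    Real.tanh Jστ =
      (1 - Real.tanh Jσ * Real.tanh Jτ - Real.tanh Jσ - Real.tanh Jτ) /
      (1 - Real.tanh Jσ * Real.tanh Jτ + Real.tanh Jσ + Real.tanh Jτ) := by
  have E1 : Real.exp (-2 * (Jτ + Jστ)) = Real.exp (-(2*Jτ)) * Real.exp (-(2*Jστ)) := by
    rw [← Real.exp_add]; ring_nf
  have E2 : Real.exp (-2 * (Jσ + Jστ)) = Real.exp (-(2*Jσ)) * Real.exp (-(2*Jστ)) := by
    rw [← Real.exp_add]; ring_nf
  have E3 : Real.exp (-2 * (Jσ + Jτ)) = Real.exp (-(2*Jσ)) * Real.exp (-(2*Jτ)) := by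
    rw [← Real.exp_add]; ring_nf
  rw [tanh_eq_exp Jσ, tanh_eq_exp Jτ, tanh_eq_exp Jστ, E1, E2, E3]
  exact alg _ _ _ (Real.exp_pos _) (Real.exp_lt_one_iff.mpr (by linarith))
    (Real.exp_pos _) (Real.exp_lt_one_iff.mpr (by linarith)) (Real.exp_pos _)
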